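/- Let a : ℝ → ℝ be C¹ with a' nondecreasing and let I ⊂ ℝ be a compact interval. Then Δ(u₁,u₂) := ∫_{[min(u₁,u₂),max(u₁,u₂)]} (max(u₁,u₂) − s)(s − min(u₁,u₂)) da''(s) is Lipschitz continuous on I × I with Lipschitz constant at most C·|I|·a''(I) for some absolute constant C. -/

import Mathlib

open MeasureTheory

/-- `Δ` is Lipschitz on `I × I` with Lipschitz constant at most `C·|I|·a''(I)` for some
absolute constant `C`. -/
theorem stmt16 :
    ∃ C > 0, ∀ (a : ℝ → ℝ), ContDiff ℝ 1 a → Monotone (deriv a) →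
      ∀ (A : StieltjesFunction ℝ), (∀ x, A x = deriv a x) →
      ∀ p q : ℝ, p ≤ q →
        LipschitzOnWith
          (Real.toNNReal (C * (q - p) * (A.measure (Set.Icc p q)).toReal))
          (fun w : ℝ × ℝ =>
            ∫ s in Set.Icc (min w.1 w.2) (max w.1 w.2),
              (max w.1 w.2 - s) * (s - min w.1 w.2) ∂A.measure)
          (Set.Icc p q ×ˢ Set.Icc p q) := by
  refine ⟨2, two_pos, ?_⟩
  intro a _ _ A _ p q hpq
  set μ := A.measure with hμ
  have hfin : μ (Set.Icc p q) < ⊤ := isCompact_Icc.measure_lt_top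
  set g : ℝ × ℝ → ℝ → ℝ :=
    fun w s => max (max w.1 w.2 - s) 0 * max (s - min w.1 w.2) 0 with hg
  have hcont : ∀ w : ℝ × ℝ, Continuous (g w) := by
    intro w; fun_prop
  have hgint : ∀ w : ℝ × ℝ, IntegrableOn (g w) (Set.Icc p q) μ :=
    fun w => (hcont w).continuousOn.integrableOn_compact isCompact_Icc
  -- rewrite the integral
  have key : ∀ w : ℝ × ℝ, w ∈ Set.Icc p q ×ˢ Set.Icc p q →
      (∫ s in Set.Icc (min w.1 w.2) (max w.1 w.2),
        (max w.1 w.2 - s) * (s - min w.1 w.2) ∂μ) = ∫ s in Set.Icc p q, g w s ∂μ := by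
    intro w hw
    obtain ⟨⟨h1p, h1q⟩, ⟨h2p, h2q⟩⟩ := hw
    have hsub : Set.Icc (min w.1 w.2) (max w.1 w.2) ⊆ Set.Icc p q :=
      Set.Icc_subset_Icc (le_min h1p h2p) (max_le h1q h2q)
    rw [setIntegral_eq_of_subset_of_forall_diff_eq_zero measurableSet_Icc hsub
      (by
        intro s hs
        rcases hs with ⟨-, hs2⟩
        simp only [Set.mem_Icc, not_and_or, not_le] at hs2
        rcases hs2 with h | h
        · have : max (s - min w.1 w.2) 0 = 0 := max_eq_right (by linarith)
          simp [hg, this]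
        · have : max (max w.1 w.2 - s) 0 = 0 := max_eq_right (by linarith)
          simp [hg, this])]
    refine setIntegral_congr_fun measurableSet_Icc ?_
    intro s hs
    rcases hs with ⟨hs1, hs2⟩
    have e1 : max (max w.1 w.2 - s) 0 = max w.1 w.2 - s := max_eq_left (by linarith)
    have e2 : max (s - min w.1 w.2) 0 = s - min w.1 w.2 := max_eq_left (by linarith)
    simp [hg, e1, e2]
  refine LipschitzOnWith.of_dist_le_mul ?_
  intro w hw w' hw'
  rw [key w hw, key w' hw']
  have hK0 : (0:ℝ) ≤ 2 * (q - p) * (μ (Set.Icc p q)).toReal := by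
    have : (0:ℝ) ≤ q - p := by linarith
    positivity
  rw [Real.coe_toNNReal _ hK0, Real.dist_eq, ← integral_sub (hgint w) (hgint w')]
  have hbound : ∀ s ∈ Set.Icc p q,
      ‖g w s - g w' s‖ ≤ 2 * (q - p) * dist w w' := by
    intro s hs
    obtain ⟨hsp, hsq⟩ := hs
    obtain ⟨⟨h1p, h1q⟩, ⟨h2p, h2q⟩⟩ := hw
    obtain ⟨⟨h1p', h1q'⟩, ⟨h2p', h2q'⟩⟩ := hw'
    set a1 := max (max w.1 w.2 - s) 0 with ha1
    set b1 := max (s - min w.1 w.2) 0 with hb1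
    set a2 := max (max w'.1 w'.2 - s) 0 with ha2
    set b2 := max (s - min w'.1 w'.2) 0 with hb2
    have hd : dist w w' = max (dist w.1 w'.1) (dist w.2 w'.2) := Prod.dist_eq
    have hda : |a1 - a2| ≤ dist w w' := by
      have h1 : |a1 - a2| ≤ max |max w.1 w.2 - s - (max w'.1 w'.2 - s)| |0 - 0| :=
        abs_max_sub_max_le_max _ _ _ _
      rw [hd, Real.dist_eq, Real.dist_eq]
      refine h1.trans ?_
      simp only [sub_zero, abs_zero]
      rw [max_eq_left (abs_nonneg _),
        show max w.1 w.2 - s - (max w'.1 w'.2 - s) = max w.1 w.2 - max w'.1 w'.2 from by ring]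
      exact abs_max_sub_max_le_max _ _ _ _
    have hdb : |b1 - b2| ≤ dist w w' := by
      have h1 : |b1 - b2| ≤ max |s - min w.1 w.2 - (s - min w'.1 w'.2)| |0 - 0| :=
        abs_max_sub_max_le_max _ _ _ _
      rw [hd, Real.dist_eq, Real.dist_eq, abs_sub_comm w.1 w'.1, abs_sub_comm w.2 w'.2]
      refine h1.trans ?_
      simp only [sub_zero, abs_zero]
      rw [max_eq_left (abs_nonneg _),
        show s - min w.1 w.2 - (s - min w'.1 w'.2) = min w'.1 w'.2 - min w.1 w.2 from by ring]
      exact abs_min_sub_min_le_max _ _ _ _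
    have hb1le : b1 ≤ q - p := by
      have : s - min w.1 w.2 ≤ q - p := by
        have : p ≤ min w.1 w.2 := le_min h1p h2p
        linarith
      exact max_le this (by linarith)
    have ha2le : a2 ≤ q - p := by
      have : max w'.1 w'.2 - s ≤ q - p := by
        have : max w'.1 w'.2 ≤ q := max_le h1q' h2q'
        linarith
      exact max_le this (by linarith)
    have hb10 : 0 ≤ b1 := le_max_right _ _
    have ha20 : 0 ≤ a2 := le_max_right _ _
    have split : a1 * b1 - a2 * b2 = (a1 - a2) * b1 + a2 * (b1 - b2) := by ring
    rw [Real.norm_eq_abs]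
    calc |a1 * b1 - a2 * b2| = |(a1 - a2) * b1 + a2 * (b1 - b2)| := by rw [split]
      _ ≤ |(a1 - a2) * b1| + |a2 * (b1 - b2)| := abs_add_le _ _
      _ = |a1 - a2| * b1 + a2 * |b1 - b2| := by
          rw [abs_mul, abs_mul, abs_of_nonneg hb10, abs_of_nonneg ha20]
      _ ≤ dist w w' * (q - p) + (q - p) * dist w w' :=
          add_le_add (mul_le_mul hda hb1le hb10 dist_nonneg)
            (mul_le_mul ha2le hdb (abs_nonneg _) (by linarith))
      _ = 2 * (q - p) * dist w w' := by ring
  calc ‖∫ s in Set.Icc p q, (g w s - g w' s) ∂μ‖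
      ≤ 2 * (q - p) * dist w w' * (μ (Set.Icc p q)).toReal :=
        norm_setIntegral_le_of_norm_le_const hfin hbound
    _ = 2 * (q - p) * (μ (Set.Icc p q)).toReal * dist w w' := by ring
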